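/- arXiv:1403.6788 — 2 statements merged into one kernel-verified Lean document; each statement's English description precedes it below -/
import Mathlib

section
/- Let A be a unital C*-algebra with T(A) ≠ ∅ and T(A) metrizable (e.g., A separable); fix a metric dist on T(A) inducing the weak-* topology. Let a ∈ M_k(A) be positive and let Y be a compact subset of T(A). Then for all δ > 0 and δ' > 0 there exist ε > 0 and an open neighborhood U of Y in T(A) such that for every γ ∈ U there exist τ, τ' ∈ Y with dist(τ, γ) < δ', dist(τ', γ) < δ', and d_τ(a) − δ < d_γ((a − ε)₊) < d_{τ'}(a) + δ. -/
open Filter Set Topology MeasureTheory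
open scoped ComplexOrder Matrix.Norms.L2Operator

noncomputable section

universe u v

/-- A tracial state on a unital C*-algebra `A`, viewed as an element of the weak-* dual:
a positive linear functional `τ` with `τ 1 = 1` and `τ (a b) = τ (b a)`. -/
def IsTracialState (A : Type u) [CStarAlgebra A] (τ : WeakDual ℂ A) : Prop :=
  τ 1 = 1 ∧ (∀ a : A, 0 ≤ τ (star a * a)) ∧ ∀ a b : A, τ (a * b) = τ (b * a)

/-- The tracial state space `T(A)`, as a subset of the weak-* dual (so that it carries the
weak-* topology). -/
def TS (A : Type u) [CStarAlgebra A] : Set (WeakDual ℂ A) := {τ | IsTracialState A τ}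

/-- `d_φ(a) = sup_{n ≥ 1} φ(f_{1/n}(a))`, where `f_η(t) = min (t/η) 1`, for a (positive)
linear functional `φ` on a unital C*-algebra `B`. -/
noncomputable def dRank {B : Type v} [CStarAlgebra B] (φ : B → ℂ) (a : B) : ℝ :=
  ⨆ n : ℕ, (φ (cfc (fun t : ℝ => min (((n : ℝ) + 1) * t) 1) a)).re

/-- The matrix algebra `M_k(A)` (as a star `ℂ`-algebra). -/
abbrev Mat (k : ℕ) (A : Type u) : Type u := Matrix (Fin k) (Fin k) A

/-- The unnormalized trace `τ_k((a_ij)) = ∑ i, τ (a_ii)` on `M_k(A)`, transported to a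
C*-algebra `B` which realizes `M_k(A)` via a star-algebra isomorphism `e`. -/
noncomputable def matTr {A : Type u} [CStarAlgebra A] {k : ℕ} {B : Type v} [CStarAlgebra B]
    (τ : WeakDual ℂ A) (e : Mat k A ≃⋆ₐ[ℂ] B) : B → ℂ :=
  fun b => ∑ i, τ (e.symm b i i)

/-- `(a - ε)₊`, via the continuous functional calculus. -/
noncomputable def cutMinus {B : Type v} [CStarAlgebra B] (a : B) (ε : ℝ) : B :=
  cfc (fun t : ℝ => max (t - ε) 0) a

/-- `f_η(a)` where `f_η(t) = min (t/η) 1`, via the continuous functional calculus. -/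
noncomputable def fEtaCFC {B : Type v} [CStarAlgebra B] (η : ℝ) (a : B) : B :=
  cfc (fun t : ℝ => min (t / η) 1) a

/-- `a^{1/2}`, via the continuous functional calculus. -/
noncomputable def sqrtCFC {B : Type v} [CStarAlgebra B] (a : B) : B :=
  cfc (fun t : ℝ => Real.sqrt t) a

/-- Cuntz subequivalence `a ≾ b` in a C*-algebra `B`. -/
def CuntzBelow {B : Type v} [CStarAlgebra B] (a b : B) : Prop :=
  ∃ x : ℕ → B, Tendsto (fun n => ‖x n * b * star (x n) - a‖) atTop (𝓝 0)

/-- The upper-left-corner embedding of `M_k(A)` into `M_m(A)`. -/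
def matInc {A : Type u} [Zero A] {k m : ℕ} (M : Mat k A) : Mat m A :=
  Matrix.of fun i j => if h : (i : ℕ) < k ∧ (j : ℕ) < k then M ⟨i.1, h.1⟩ ⟨j.1, h.2⟩ else 0

/-- Strict comparison of positive elements: for positive `a ∈ M_k(A)`, `b ∈ M_l(A)`,
if `d_τ(a) < d_τ(b)` for every tracial state `τ`, then `a ≾ b` in `M_{max k l}(A)`
(realized as a C*-algebra `B` via a star-algebra isomorphism). -/
def StrictComparison (A : Type u) [CStarAlgebra A] : Prop :=
  ∀ (k l : ℕ) (B : Type u) (_ : CStarAlgebra B) (_ : PartialOrder B) (_ : StarOrderedRing B)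
    (e : Mat (max k l) A ≃⋆ₐ[ℂ] B) (a : Mat k A) (b : Mat l A),
    0 ≤ e (matInc a) → 0 ≤ e (matInc b) →
    (∀ τ ∈ TS A, dRank (matTr τ e) (e (matInc a)) < dRank (matTr τ e) (e (matInc b))) →
    CuntzBelow (e (matInc a)) (e (matInc b))

/-- The extreme boundary `∂_e T(A)` of the tracial state space. -/
def extTS (A : Type u) [CStarAlgebra A] : Set (WeakDual ℂ A) :=
  Set.extremePoints ℝ (TS A)

/-- A C*-algebra is simple if its only closed two-sided ideals are `0` and the whole algebra. -/
def IsSimpleCStar (A : Type u) [CStarAlgebra A] : Prop :=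
  ∀ I : TwoSidedIdeal A, IsClosed (I : Set A) → (I : Set A) = {0} ∨ (I : Set A) = Set.univ

/-- `F_σ` subsets: countable unions of closed sets. -/
def IsFSigmaIn {E : Type v} [TopologicalSpace E] (X : Set E) : Prop :=
  ∃ C : ℕ → Set E, (∀ n, IsClosed (C n)) ∧ X = ⋃ n, C n

/-- Covering dimension at most `m`: every finite open cover admits a finite open refinement
in which every point lies in at most `m + 1` members. -/
def CovDimLE (X : Type v) [TopologicalSpace X] (m : ℕ) : Prop :=
  ∀ (n : ℕ) (U : Fin n → Set X), (∀ i, IsOpen (U i)) → (⋃ i, U i) = univ →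
    ∃ (p : ℕ) (V : Fin p → Set X), (∀ j, IsOpen (V j)) ∧ (⋃ j, V j) = univ ∧
      (∀ j, ∃ i, V j ⊆ U i) ∧ ∀ x : X, {j | x ∈ V j}.ncard ≤ m + 1

/-- Zero-dimensionality: the topology has a basis of clopen sets. -/
def ZeroDim (X : Type v) [TopologicalSpace X] : Prop :=
  ∀ (x : X) (U : Set X), IsOpen U → x ∈ U → ∃ V : Set X, IsClopen V ∧ x ∈ V ∧ V ⊆ U

/-- Real-valued functions that are affine on `T(A)`. -/
def AffineOnTS {A : Type u} [CStarAlgebra A] (f : WeakDual ℂ A → ℝ) : Prop :=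
  ∀ σ ∈ TS A, ∀ σ' ∈ TS A, ∀ t : ℝ, 0 ≤ t → t ≤ 1 →
    f (t • σ + (1 - t) • σ') = t * f σ + (1 - t) * f σ'

/-- A Borel measure `μ` represents `τ` if `f τ = ∫ f dμ` for every weak-* continuous
affine real-valued function `f` on `T(A)`. -/
def Represents {A : Type u} [CStarAlgebra A] [MeasurableSpace (WeakDual ℂ A)]
    (μ : Measure (WeakDual ℂ A)) (τ : WeakDual ℂ A) : Prop :=
  ∀ f : WeakDual ℂ A → ℝ, ContinuousOn f (TS A) → AffineOnTS f → f τ = ∫ σ, f σ ∂μ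

/-- A metric space structure is compatible if it induces the given topology. -/
def CompatibleMetric (X : Type v) [t : TopologicalSpace X] (m : MetricSpace X) : Prop :=
  m.toUniformSpace.toTopologicalSpace = t

/-- Positivity of a matrix over a star ring: `M = Nᴴ * N` for some `N`. -/
def MatPos {R : Type v} [Ring R] [StarRing R] {n : ℕ} (M : Matrix (Fin n) (Fin n) R) : Prop :=
  ∃ N : Matrix (Fin n) (Fin n) R, M = N.conjTranspose * N

/-- Completely positive `ℂ`-linear maps: all matrix amplifications preserve positivity. -/
def IsCP {R : Type u} {S : Type v} [Ring R] [StarRing R] [Algebra ℂ R]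
    [Ring S] [StarRing S] [Algebra ℂ S] (φ : R →ₗ[ℂ] S) : Prop :=
  ∀ (n : ℕ) (M : Matrix (Fin n) (Fin n) R), MatPos M → MatPos (M.map ⇑φ)

/-- Completely positive contractive (cpc) maps. -/
def IsCPC {R : Type u} {S : Type v} [NormedRing R] [StarRing R] [NormedAlgebra ℂ R]
    [NormedRing S] [StarRing S] [NormedAlgebra ℂ S] (φ : R →ₗ[ℂ] S) : Prop :=
  IsCP φ ∧ ∀ x : R, ‖φ x‖ ≤ ‖x‖

/-- cpc order zero maps from `M_k(ℂ)` (with the operator norm) into `S`: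
cpc maps preserving orthogonality of positive elements. -/
def IsCPCOrderZero {S : Type v} [NormedRing S] [StarRing S] [NormedAlgebra ℂ S] {k : ℕ}
    (φ : Matrix (Fin k) (Fin k) ℂ →ₗ[ℂ] S) : Prop :=
  IsCPC φ ∧ ∀ x y : Matrix (Fin k) (Fin k) ℂ, x.PosSemidef → y.PosSemidef → x * y = 0 →
    φ x * φ y = 0

/-- Nuclearity, via the completely positive approximation property. -/
def IsNuclear (A : Type u) [CStarAlgebra A] : Prop :=
  ∀ (G : Finset A) (ε : ℝ), 0 < ε →
    ∃ (n : ℕ) (ψ : A →ₗ[ℂ] Matrix (Fin n) (Fin n) ℂ) (φ : Matrix (Fin n) (Fin n) ℂ →ₗ[ℂ] A),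
      IsCPC ψ ∧ IsCPC φ ∧ ∀ a ∈ G, ‖φ (ψ a) - a‖ < ε


section Aux
variable {A : Type u} [CStarAlgebra A] {k : ℕ} {B : Type v} [CStarAlgebra B]
  [PartialOrder B] [StarOrderedRing B] (e : Mat k A ≃⋆ₐ[ℂ] B)

lemma matTr_nonneg' {τ : WeakDual ℂ A} (hτ : IsTracialState A τ) {b : B} (hb : 0 ≤ b) :
    0 ≤ matTr τ e b := by
  set s := CFC.sqrt b with hs
  have hsa : IsSelfAdjoint s := (CFC.sqrt_nonneg (a := b)).isSelfAdjoint
  have hbss : b = star s * s := by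
    rw [hsa.star_eq, CFC.sqrt_mul_sqrt_self b hb]
  set M := e.symm s with hM
  have hsymm : e.symm b = star M * M := by
    rw [hbss, map_mul, map_star]
  rw [matTr]
  refine Finset.sum_nonneg fun i _ => ?_
  rw [hsymm]
  have : (star M * M) i i = ∑ j, star (M j i) * M j i := by
    simp [Matrix.mul_apply, Matrix.star_apply]
  rw [this, map_sum]
  exact Finset.sum_nonneg fun j _ => hτ.2.1 _

lemma matTr_nonneg {τ : WeakDual ℂ A} (hτ : IsTracialState A τ) {b : B} (hb : 0 ≤ b) :
    0 ≤ (matTr τ e b).re :=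
  (Complex.le_def.mp (matTr_nonneg' e hτ hb)).1

lemma matTr_sub (τ : WeakDual ℂ A) (b c : B) :
    matTr τ e (b - c) = matTr τ e b - matTr τ e c := by
  simp [matTr, map_sub, Matrix.sub_apply, Finset.sum_sub_distrib]

lemma matTr_mono {τ : WeakDual ℂ A} (hτ : IsTracialState A τ) {b c : B} (h : b ≤ c) :
    (matTr τ e b).re ≤ (matTr τ e c).re := by
  have h0 : 0 ≤ (matTr τ e (c - b)).re := matTr_nonneg e hτ (sub_nonneg.mpr h)
  rw [matTr_sub, Complex.sub_re] at h0
  linarith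

lemma matTr_algebraMap {τ : WeakDual ℂ A} (hτ : IsTracialState A τ) (r : ℝ) :
    (matTr τ e (algebraMap ℝ B r)).re = k * r := by
  have h1 : algebraMap ℝ B r = (r : ℂ) • (1 : B) := by
    rw [Algebra.algebraMap_eq_smul_one, ← algebraMap_smul ℂ r (1 : B)]
    norm_num
  rw [matTr]
  have : ∀ i : Fin k, τ (e.symm (algebraMap ℝ B r) i i) = (r : ℂ) := by
    intro i
    rw [h1, _root_.map_smul, _root_.map_one]
    simp only [Matrix.smul_apply, Matrix.one_apply_eq]
    rw [_root_.map_smul, hτ.1, smul_eq_mul, mul_one]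
  simp only [this]
  simp [Finset.sum_const]

lemma matTr_continuous (b : B) :
    Continuous fun γ : WeakDual ℂ A => (matTr γ e b).re := by
  apply Complex.continuous_re.comp
  exact continuous_finset_sum _ fun i _ => WeakDual.eval_continuous _

lemma dRank_bddAbove {τ : WeakDual ℂ A} (hτ : IsTracialState A τ) {b : B} (hb : 0 ≤ b) :
    BddAbove (Set.range fun n : ℕ =>
      (matTr τ e (cfc (fun t : ℝ => min (((n : ℝ) + 1) * t) 1) b)).re) := by
  refine ⟨(matTr τ e (1 : B)).re, ?_⟩
  rintro x ⟨n, rfl⟩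
  refine matTr_mono e hτ ?_
  exact cfc_le_one _ b fun x _ => min_le_right _ _

lemma term_le_dRank {τ : WeakDual ℂ A} (hτ : IsTracialState A τ) {b : B} (hb : 0 ≤ b) (n : ℕ) :
    (matTr τ e (cfc (fun t : ℝ => min (((n : ℝ) + 1) * t) 1) b)).re ≤ dRank (matTr τ e) b :=
  le_ciSup (dRank_bddAbove e hτ hb) n


lemma cutMinus_nonneg (a : B) (ε : ℝ) : 0 ≤ cutMinus a ε :=
  cfc_nonneg fun x _ => le_max_right _ _

lemma cfc_comp_cut {a : B} (ha : 0 ≤ a) (ε : ℝ) (g : ℝ → ℝ) (hg : Continuous g) :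
    cfc (fun t : ℝ => g (max (t - ε) 0)) a = cfc g (cutMinus a ε) := by
  rw [cutMinus]
  exact cfc_comp' g (fun t : ℝ => max (t - ε) 0) a hg.continuousOn
    (by fun_prop) ha.isSelfAdjoint

lemma lower_key {τ : WeakDual ℂ A} (hτ : IsTracialState A τ) {a : B} (ha : 0 ≤ a)
    {ε : ℝ} (hε : 0 < ε) (n : ℕ) :
    (matTr τ e (cfc (fun t : ℝ => min (((n : ℝ) + 1) * t) 1) a)).re - k * (((n : ℝ) + 1) * ε)
      ≤ dRank (matTr τ e) (cutMinus a ε) := by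
  have hcomp : cfc (fun t : ℝ => min (((n : ℝ) + 1) * max (t - ε) 0) 1) a
      = cfc (fun t : ℝ => min (((n : ℝ) + 1) * t) 1) (cutMinus a ε) :=
    cfc_comp_cut ha ε (fun t : ℝ => min (((n : ℝ) + 1) * t) 1) (by fun_prop)
  have hptwise : ∀ t : ℝ, min (((n : ℝ) + 1) * t) 1 - ((n : ℝ) + 1) * ε
      ≤ min (((n : ℝ) + 1) * max (t - ε) 0) 1 := by
    intro t
    have hn : (0 : ℝ) ≤ (n : ℝ) + 1 := by positivity
    rcases le_total t ε with h | h
    · have hmax : max (t - ε) 0 = 0 := max_eq_right (by linarith)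
      rw [hmax, mul_zero]
      have h1 : min (((n : ℝ) + 1) * t) 1 ≤ ((n : ℝ) + 1) * t := min_le_left _ _
      have h2 : ((n : ℝ) + 1) * t ≤ ((n : ℝ) + 1) * ε := by nlinarith
      simp only [min_eq_left (zero_le_one)]
      linarith
    · have hmax : max (t - ε) 0 = t - ε := max_eq_left (by linarith)
      rw [hmax]
      rcases le_total (((n : ℝ) + 1) * (t - ε)) 1 with h' | h'
      · rw [min_eq_left h']
        have h1 : min (((n : ℝ) + 1) * t) 1 ≤ ((n : ℝ) + 1) * t := min_le_left _ _
        nlinarith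
      · rw [min_eq_right h']
        have h1 : min (((n : ℝ) + 1) * t) 1 ≤ 1 := min_le_right _ _
        nlinarith
  have hB : cfc (fun t : ℝ => min (((n : ℝ) + 1) * t) 1) a - algebraMap ℝ B (((n : ℝ) + 1) * ε)
      ≤ cfc (fun t : ℝ => min (((n : ℝ) + 1) * max (t - ε) 0) 1) a := by
    have hsub : cfc (fun t : ℝ => min (((n : ℝ) + 1) * t) 1 - ((n : ℝ) + 1) * ε) a
        = cfc (fun t : ℝ => min (((n : ℝ) + 1) * t) 1) a
          - algebraMap ℝ B (((n : ℝ) + 1) * ε) := by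
      rw [cfc_sub _ _ a (by fun_prop) (by fun_prop), cfc_const _ _ ha.isSelfAdjoint]
    rw [← hsub]
    exact cfc_mono (fun x _ => hptwise x) (by fun_prop) (by fun_prop)
  have hmono := matTr_mono e hτ hB
  rw [matTr_sub] at hmono
  rw [Complex.sub_re] at hmono
  rw [matTr_algebraMap e hτ] at hmono
  calc (matTr τ e (cfc (fun t : ℝ => min (((n : ℝ) + 1) * t) 1) a)).re
        - k * (((n : ℝ) + 1) * ε)
      ≤ (matTr τ e (cfc (fun t : ℝ => min (((n : ℝ) + 1) * max (t - ε) 0) 1) a)).re := hmono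
    _ = (matTr τ e (cfc (fun t : ℝ => min (((n : ℝ) + 1) * t) 1) (cutMinus a ε))).re := by
          rw [hcomp]
    _ ≤ dRank (matTr τ e) (cutMinus a ε) :=
          term_le_dRank e hτ (cutMinus_nonneg a ε) n

lemma upper_key1 {γ : WeakDual ℂ A} (hγ : IsTracialState A γ) {a : B} (ha : 0 ≤ a)
    {ε : ℝ} (hε : 0 < ε) :
    dRank (matTr γ e) (cutMinus a ε) ≤ (matTr γ e (cfc (fun t : ℝ => min (t / ε) 1) a)).re := by
  refine ciSup_le fun n => ?_
  rw [← cfc_comp_cut ha ε (fun t : ℝ => min (((n : ℝ) + 1) * t) 1) (by fun_prop)]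
  refine matTr_mono e hγ (cfc_mono (fun x hx => ?_) (by fun_prop) (by fun_prop))
  have hx0 : 0 ≤ x := spectrum_nonneg_of_nonneg ha hx
  rcases le_total x ε with h | h
  · have hmax : max (x - ε) 0 = 0 := max_eq_right (by linarith)
    rw [hmax, mul_zero]
    simp only [min_eq_left (zero_le_one)]
    positivity
  · have : (1 : ℝ) ≤ x / ε := (one_le_div hε).mpr h
    rw [min_eq_right this]
    exact min_le_right _ _

lemma upper_key2 {τ' : WeakDual ℂ A} (hτ' : IsTracialState A τ') {a : B} (ha : 0 ≤ a)
    {ε : ℝ} (hε : 0 < ε) :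
    (matTr τ' e (cfc (fun t : ℝ => min (t / ε) 1) a)).re ≤ dRank (matTr τ' e) a := by
  set n := ⌈1 / ε⌉₊ with hn
  refine le_trans (matTr_mono e hτ' (cfc_mono (fun x hx => ?_) (by fun_prop) (by fun_prop)))
    (term_le_dRank e hτ' ha n)
  have hx0 : 0 ≤ x := spectrum_nonneg_of_nonneg ha hx
  refine min_le_min ?_ le_rfl
  have h1 : 1 / ε ≤ (n : ℝ) + 1 := le_trans (Nat.le_ceil _) (by linarith)
  calc x / ε = (1 / ε) * x := by ring
    _ ≤ ((n : ℝ) + 1) * x := by nlinarith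

lemma exists_ball_nbhd {A : Type u} [CStarAlgebra A]
    (m : MetricSpace ↥(TS A)) (hm : CompatibleMetric ↥(TS A) m)
    {τ : WeakDual ℂ A} (hτ : τ ∈ TS A) {r : ℝ} (hr : 0 < r) :
    ∃ W : Set (WeakDual ℂ A), IsOpen W ∧ τ ∈ W ∧
      ∀ γ, ∀ hγ : γ ∈ TS A, γ ∈ W →
        m.toPseudoMetricSpace.toDist.dist ⟨τ, hτ⟩ ⟨γ, hγ⟩ < r := by
  unfold CompatibleMetric at hm
  have hball : @IsOpen _ m.toUniformSpace.toTopologicalSpace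
      (@Metric.ball _ m.toPseudoMetricSpace ⟨τ, hτ⟩ r) :=
    @Metric.isOpen_ball _ m.toPseudoMetricSpace _ _
  rw [hm] at hball
  obtain ⟨W, hWopen, hWeq⟩ := isOpen_induced_iff.mp hball
  refine ⟨W, hWopen, ?_, ?_⟩
  · have hmem : (⟨τ, hτ⟩ : ↥(TS A)) ∈ @Metric.ball _ m.toPseudoMetricSpace ⟨τ, hτ⟩ r := by
      rw [@Metric.mem_ball _ m.toPseudoMetricSpace]
      rw [m.toPseudoMetricSpace.dist_self]
      exact hr
    rw [← hWeq] at hmem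
    exact hmem
  · intro γ hγ hγW
    have hmem : (⟨γ, hγ⟩ : ↥(TS A)) ∈ Subtype.val ⁻¹' W := hγW
    rw [hWeq, @Metric.mem_ball _ m.toPseudoMetricSpace] at hmem
    rw [m.toPseudoMetricSpace.dist_comm]
    exact hmem

end Aux

theorem stmt_5 {A : Type u} [CStarAlgebra A] (hTA : (TS A).Nonempty)
    (m : MetricSpace ↥(TS A)) (hm : CompatibleMetric ↥(TS A) m)
    {k : ℕ} {B : Type v} [CStarAlgebra B] [PartialOrder B] [StarOrderedRing B]
    (e : Mat k A ≃⋆ₐ[ℂ] B) (a : B) (ha : 0 ≤ a)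
    {Y : Set (WeakDual ℂ A)} (hYT : Y ⊆ TS A) (hYcomp : IsCompact Y)
    {δ δ' : ℝ} (hδ : 0 < δ) (hδ' : 0 < δ') :
    ∃ ε : ℝ, 0 < ε ∧ ∃ U : Set (WeakDual ℂ A), IsOpen U ∧ Y ⊆ U ∧
      ∀ γ, ∀ hγ : γ ∈ U ∩ TS A,
        ∃ τ, ∃ hτ : τ ∈ Y, ∃ τ', ∃ hτ' : τ' ∈ Y,
          m.toPseudoMetricSpace.toDist.dist ⟨τ, hYT hτ⟩ ⟨γ, hγ.2⟩ < δ' ∧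
          m.toPseudoMetricSpace.toDist.dist ⟨τ', hYT hτ'⟩ ⟨γ, hγ.2⟩ < δ' ∧
          dRank (matTr τ e) a - δ < dRank (matTr γ e) (cutMinus a ε) ∧
          dRank (matTr γ e) (cutMinus a ε) < dRank (matTr τ' e) a + δ := by
  classical
  have hδ4 : 0 < δ / 4 := by linarith
  -- choice of n for each τ in Y (lower approximation of dRank)
  have hchoice : ∀ τ : ↥Y, ∃ n : ℕ,
      dRank (matTr (τ : WeakDual ℂ A) e) a - δ / 4
        < (matTr (τ : WeakDual ℂ A) e (cfc (fun t : ℝ => min (((n : ℝ) + 1) * t) 1) a)).re := by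
    intro τ
    have h : dRank (matTr (τ : WeakDual ℂ A) e) a - δ / 4
        < ⨆ n : ℕ, (matTr (τ : WeakDual ℂ A) e
            (cfc (fun t : ℝ => min (((n : ℝ) + 1) * t) 1) a)).re := by
      rw [show (⨆ n : ℕ, (matTr (τ : WeakDual ℂ A) e
            (cfc (fun t : ℝ => min (((n : ℝ) + 1) * t) 1) a)).re)
          = dRank (matTr (τ : WeakDual ℂ A) e) a from rfl]
      exact sub_lt_self _ hδ4
    exact exists_lt_of_lt_ciSup h
  choose nn hnn using hchoice
  -- metric ball neighborhoods
  have hWex : ∀ τ : ↥Y, ∃ W : Set (WeakDual ℂ A), IsOpen W ∧ (τ : WeakDual ℂ A) ∈ W ∧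
      ∀ γ, ∀ hγ : γ ∈ TS A, γ ∈ W →
        m.toPseudoMetricSpace.toDist.dist ⟨(τ : WeakDual ℂ A), hYT τ.2⟩ ⟨γ, hγ⟩ < δ' :=
    fun τ => exists_ball_nbhd m hm (hYT τ.2) hδ'
  choose W hWopen hWmem hWdist using hWex
  -- first (lower) cover
  set c : ↥Y → B := fun τ => cfc (fun t : ℝ => min (((nn τ : ℝ) + 1) * t) 1) a with hc
  set V : ↥Y → Set (WeakDual ℂ A) := fun τ =>
    ({γ | (matTr (τ : WeakDual ℂ A) e (c τ)).re - δ / 4 < (matTr γ e (c τ)).re} ∩ W τ) with hV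
  have hVopen : ∀ τ, IsOpen (V τ) := fun τ =>
    (isOpen_lt continuous_const (matTr_continuous e (c τ))).inter (hWopen τ)
  have hVmem : ∀ τ : ↥Y, (τ : WeakDual ℂ A) ∈ V τ := fun τ =>
    ⟨sub_lt_self _ hδ4, hWmem τ⟩
  obtain ⟨t1, ht1⟩ := hYcomp.elim_finite_subcover V hVopen
    (fun y hy => mem_iUnion.mpr ⟨⟨y, hy⟩, hVmem _⟩)
  -- choose ε
  set N : ℕ := t1.sup nn with hN
  set ε : ℝ := δ / (4 * ((k : ℝ) + 1) * ((N : ℝ) + 1)) with hεdef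
  have hεpos : 0 < ε := by
    rw [hεdef]; positivity
  have hεkey : ∀ i ∈ t1, (k : ℝ) * (((nn i : ℝ) + 1) * ε) ≤ δ / 4 := by
    intro i hi
    have h1 : (nn i : ℝ) + 1 ≤ (N : ℝ) + 1 := by
      have := Finset.le_sup (f := nn) hi
      have : (nn i : ℝ) ≤ (N : ℝ) := by exact_mod_cast this
      linarith
    have h2 : ((k : ℝ) + 1) * (((N : ℝ) + 1) * ε) = δ / 4 := by
      rw [hεdef]
      field_simp
    have hk0 : (0 : ℝ) ≤ (k : ℝ) := Nat.cast_nonneg k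
    have e1 : (k : ℝ) * (((nn i : ℝ) + 1) * ε) ≤ (k : ℝ) * (((N : ℝ) + 1) * ε) :=
      mul_le_mul_of_nonneg_left (mul_le_mul_of_nonneg_right h1 (le_of_lt hεpos)) hk0
    have e2 : (k : ℝ) * (((N : ℝ) + 1) * ε) ≤ ((k : ℝ) + 1) * (((N : ℝ) + 1) * ε) :=
      mul_le_mul_of_nonneg_right (by linarith) (by positivity)
    linarith
  -- second (upper) cover
  set cε : B := cfc (fun t : ℝ => min (t / ε) 1) a with hcε
  set Q : ↥Y → Set (WeakDual ℂ A) := fun τ =>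
    ({γ | (matTr γ e cε).re < (matTr (τ : WeakDual ℂ A) e cε).re + δ / 2} ∩ W τ) with hQ
  have hQopen : ∀ τ, IsOpen (Q τ) := fun τ =>
    (isOpen_lt (matTr_continuous e cε) continuous_const).inter (hWopen τ)
  have hQmem : ∀ τ : ↥Y, (τ : WeakDual ℂ A) ∈ Q τ := fun τ =>
    ⟨lt_add_of_pos_right _ (show (0:ℝ) < δ / 2 by linarith), hWmem τ⟩
  obtain ⟨t2, ht2⟩ := hYcomp.elim_finite_subcover Q hQopen
    (fun y hy => mem_iUnion.mpr ⟨⟨y, hy⟩, hQmem _⟩)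
  refine ⟨ε, hεpos, (⋃ i ∈ t1, V i) ∩ (⋃ j ∈ t2, Q j),
    (isOpen_biUnion fun i _ => hVopen i).inter (isOpen_biUnion fun j _ => hQopen j),
    subset_inter ht1 ht2, ?_⟩
  intro γ hγ
  obtain ⟨⟨hγU1, hγU2⟩, hγT⟩ := hγ
  obtain ⟨i, hit1, hγVi⟩ := mem_iUnion₂.mp hγU1
  obtain ⟨j, hjt2, hγQj⟩ := mem_iUnion₂.mp hγU2
  refine ⟨(i : WeakDual ℂ A), i.2, (j : WeakDual ℂ A), j.2,
    hWdist i γ hγT hγVi.2, hWdist j γ hγT hγQj.2, ?_, ?_⟩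
  · -- lower bound
    have h1 := hnn i
    have h2 : (matTr (i : WeakDual ℂ A) e (c i)).re - δ / 4 < (matTr γ e (c i)).re := hγVi.1
    have h3 : (matTr γ e (c i)).re - (k : ℝ) * (((nn i : ℝ) + 1) * ε)
        ≤ dRank (matTr γ e) (cutMinus a ε) := lower_key e hγT ha hεpos (nn i)
    have h4 := hεkey i hit1
    have h1' : dRank (matTr (i : WeakDual ℂ A) e) a - δ / 4
        < (matTr (i : WeakDual ℂ A) e (c i)).re := h1
    linarith
  · -- upper bound
    have u1 : dRank (matTr γ e) (cutMinus a ε) ≤ (matTr γ e cε).re :=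
      upper_key1 e hγT ha hεpos
    have u2 : (matTr γ e cε).re < (matTr (j : WeakDual ℂ A) e cε).re + δ / 2 := hγQj.1
    have u3 : (matTr (j : WeakDual ℂ A) e cε).re ≤ dRank (matTr (j : WeakDual ℂ A) e) a :=
      upper_key2 e (hYT j.2) ha hεpos
    linarith

end
end

section
/- Let A be a separable unital simple infinite-dimensional C*-algebra such that X = ∂_e T(A) is nonempty and F_σ, and write ∂X = X̄ \ X. Suppose each τ ∈ ∂X has a representing Borel probability measure μ_τ on X, and suppose there exist a compact subset F ⊂ X and a real number 0 < ε < 1 such that μ_τ(F) > ε for all τ ∈ ∂X. Then ∂X ∪ F is a compact subset of T(A). -/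
open Filter Set Topology MeasureTheory
open scoped ComplexOrder Matrix.Norms.L2Operator

noncomputable section

universe u v

section Aux

open ComplexStarModule

variable {A : Type u} [CStarAlgebra A]

lemma wd_smul_apply (r : ℝ) (σ : WeakDual ℂ A) (x : A) : (r • σ) x = r • σ x := rfl
lemma wd_add_apply (σ σ' : WeakDual ℂ A) (x : A) : (σ + σ') x = σ x + σ' x := rfl

lemma isClosed_TS : IsClosed (TS A) := by
  have h0 : IsClosed {z : ℂ | 0 ≤ z} := by
    have : {z : ℂ | 0 ≤ z} = Complex.re ⁻¹' Set.Ici 0 ∩ Complex.im ⁻¹' {0} := by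
      ext z
      simp [Complex.le_def, eq_comm]
    rw [this]
    exact (isClosed_Ici.preimage Complex.continuous_re).inter
      (isClosed_singleton.preimage Complex.continuous_im)
  have : TS A = {τ : WeakDual ℂ A | τ 1 = 1} ∩
      ((⋂ a : A, {τ : WeakDual ℂ A | 0 ≤ τ (star a * a)}) ∩
       ⋂ a : A, ⋂ b : A, {τ : WeakDual ℂ A | τ (a * b) = τ (b * a)}) := by
    ext τ
    simp only [TS, IsTracialState, Set.mem_setOf_eq, Set.mem_inter_iff, Set.mem_iInter]
  rw [this]
  refine (isClosed_eq (WeakDual.eval_continuous 1) continuous_const).inter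
    ((isClosed_iInter fun a => h0.preimage (WeakDual.eval_continuous _)).inter
      (isClosed_iInter fun a => isClosed_iInter fun b =>
        isClosed_eq (WeakDual.eval_continuous _) (WeakDual.eval_continuous _)))

lemma convex_TS : Convex ℝ (TS A) := by
  rintro σ ⟨h1, h2, h3⟩ σ' ⟨h1', h2', h3'⟩ s t hs ht hst
  refine ⟨?_, fun a => ?_, fun a b => ?_⟩
  · show s • σ 1 + t • σ' 1 = 1
    rw [h1, h1']
    simp only [Complex.real_smul, mul_one]
    exact_mod_cast hst
  · show 0 ≤ s • σ (star a * a) + t • σ' (star a * a)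
    have := h2 a; have := h2' a
    apply add_nonneg <;> rw [Complex.real_smul] <;>
      exact mul_nonneg (by exact_mod_cast Complex.zero_le_real.mpr (by assumption)) (by assumption)
  · show s • σ (a*b) + t • σ' (a*b) = s • σ (b*a) + t • σ' (b*a)
    rw [h3, h3']

lemma exists_star_mul_self [Nontrivial A] (x : A) (hx : IsSelfAdjoint x) :
    ∃ s : A, star s * s = algebraMap ℝ A ‖x‖ - x := by
  refine ⟨cfc (fun t : ℝ => Real.sqrt (‖x‖ - t)) x, ?_⟩
  have hs : IsSelfAdjoint (cfc (fun t : ℝ => Real.sqrt (‖x‖ - t)) x) := cfc_predicate _ x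
  rw [hs.star_eq, ← cfc_mul _ _ x (by fun_prop) (by fun_prop)]
  have h1 : ∀ t ∈ spectrum ℝ x, Real.sqrt (‖x‖ - t) * Real.sqrt (‖x‖ - t) = ‖x‖ - t := by
    intro t ht
    have h2 : ‖t‖ ≤ ‖x‖ := spectrum.norm_le_norm_of_mem ht
    have h0 : 0 ≤ ‖x‖ - t := by
      have := abs_le.mp (by simpa [Real.norm_eq_abs] using h2)
      linarith [this.2]
    rw [Real.mul_self_sqrt h0]
  rw [cfc_congr h1]
  rw [cfc_sub _ _ x (by fun_prop) (by fun_prop), cfc_const _ x, cfc_id' ℝ x]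

lemma ts_apply_algebraMap {τ : WeakDual ℂ A} (hτ : τ ∈ TS A) (r : ℝ) :
    τ (algebraMap ℝ A r) = (r : ℂ) := by
  rw [IsScalarTower.algebraMap_apply ℝ ℂ A, Algebra.algebraMap_eq_smul_one, _root_.map_smul,
    hτ.1, smul_eq_mul, mul_one, Complex.coe_algebraMap]

lemma ts_selfAdjoint_bound [Nontrivial A] {τ : WeakDual ℂ A} (hτ : τ ∈ TS A) {x : A}
    (hx : IsSelfAdjoint x) : (τ x).im = 0 ∧ |(τ x).re| ≤ ‖x‖ := by
  have key : ∀ y : A, IsSelfAdjoint y → 0 ≤ (‖y‖ : ℂ) - τ y := by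
    intro y hy
    obtain ⟨s, hs⟩ := exists_star_mul_self y hy
    have h2 := hτ.2.1 s
    rw [hs, map_sub, ts_apply_algebraMap hτ] at h2
    exact h2
  have hm := key x hx
  have hp := key (-x) hx.neg
  rw [norm_neg, map_neg] at hp
  rw [Complex.le_def] at hm hp
  simp only [Complex.sub_re, Complex.sub_im, Complex.ofReal_re, Complex.ofReal_im,
    Complex.zero_re, Complex.zero_im, Complex.neg_re, Complex.neg_im] at hm hp
  constructor
  · linarith [hm.2, hp.2]
  · rw [abs_le]; constructor <;> linarith [hm.1, hp.1]

lemma ts_norm_bound [Nontrivial A] {τ : WeakDual ℂ A} (hτ : τ ∈ TS A) (a : A) :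
    ‖τ a‖ ≤ 2 * ‖a‖ := by
  have hτa : τ a = τ (ℜ a : A) + Complex.I * τ (ℑ a : A) := by
    conv_lhs => rw [← realPart_add_I_smul_imaginaryPart a]
    rw [map_add, _root_.map_smul, smul_eq_mul]
  have hnr : ‖(ℜ a : A)‖ ≤ ‖a‖ := by
    rw [realPart_apply_coe]
    calc ‖(2 : ℝ)⁻¹ • (a + star a)‖ = 2⁻¹ * ‖a + star a‖ := by
          rw [norm_smul]; simp
      _ ≤ 2⁻¹ * (‖a‖ + ‖star a‖) :=
          mul_le_mul_of_nonneg_left (norm_add_le a (star a)) (by norm_num)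
      _ = ‖a‖ := by rw [norm_star]; ring
  have hni : ‖(ℑ a : A)‖ ≤ ‖a‖ := by
    rw [imaginaryPart_apply_coe]
    calc ‖-Complex.I • (2 : ℝ)⁻¹ • (a - star a)‖ = 2⁻¹ * ‖a - star a‖ := by
          rw [norm_smul, norm_smul]; simp
      _ ≤ 2⁻¹ * (‖a‖ + ‖star a‖) :=
          mul_le_mul_of_nonneg_left (norm_sub_le a (star a)) (by norm_num)
      _ = ‖a‖ := by rw [norm_star]; ring
  have key : ∀ x : A, IsSelfAdjoint x → ‖τ x‖ ≤ ‖x‖ := by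
    intro x hx
    obtain ⟨h1, h2⟩ := ts_selfAdjoint_bound hτ hx
    have heq : τ x = ((τ x).re : ℂ) := by apply Complex.ext <;> simp [h1]
    rw [heq, Complex.norm_real, Real.norm_eq_abs]
    exact h2
  calc ‖τ a‖ ≤ ‖τ (ℜ a : A)‖ + ‖Complex.I * τ (ℑ a : A)‖ := by
        rw [hτa]; exact norm_add_le _ _
    _ ≤ ‖a‖ + ‖a‖ := by
        rw [norm_mul, Complex.norm_I, one_mul]
        exact add_le_add (le_trans (key _ (ℜ a).prop) hnr) (le_trans (key _ (ℑ a).prop) hni)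
    _ = 2 * ‖a‖ := by ring

lemma isCompact_TS [Nontrivial A] : IsCompact (TS A) := by
  apply WeakDual.isCompact_of_bounded_of_closed ?_ isClosed_TS
  apply (Metric.isBounded_closedBall (x := (0 : StrongDual ℂ A)) (r := 2)).subset
  intro φ hφ
  rw [Metric.mem_closedBall, dist_zero_right]
  exact ContinuousLinearMap.opNorm_le_bound _ (by norm_num) fun a => ts_norm_bound hφ a

end Aux

section Milman

set_option linter.unusedSectionVars false

variable {E : Type v} [AddCommGroup E] [Module ℝ E] [TopologicalSpace E]
  [IsTopologicalAddGroup E] [ContinuousSMul ℝ E] [T2Space E]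

lemma isCompact_convexJoin' {s t : Set E} (hs : IsCompact s) (ht : IsCompact t) :
    IsCompact (convexJoin ℝ s t) := by
  have heq : convexJoin ℝ s t =
      (fun p : ℝ × E × E => (1 - p.1) • p.2.1 + p.1 • p.2.2) '' (Icc (0:ℝ) 1 ×ˢ s ×ˢ t) := by
    ext x
    simp only [mem_convexJoin, Set.mem_image, Set.mem_prod, segment_eq_image, Prod.exists]
    constructor
    · rintro ⟨a, ha, b, hb, θ, hθ, rfl⟩
      exact ⟨θ, a, b, ⟨hθ, ha, hb⟩, rfl⟩
    · rintro ⟨θ, a, b, ⟨hθ, ha, hb⟩, rfl⟩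
      exact ⟨a, ha, b, hb, θ, hθ, rfl⟩
  rw [heq]
  exact ((isCompact_Icc.prod (hs.prod ht)).image (by fun_prop))

variable {ι : Type v}

lemma extreme_of_convexHull_biUnion {K : Set E} (hconv : Convex ℝ K) (T : Finset ι)
    {Ks : ι → Set E}
    (hKs : ∀ i ∈ T, Convex ℝ (Ks i)) (hsub : ∀ i ∈ T, Ks i ⊆ K)
    {τ : E} (hτ : τ ∈ Set.extremePoints ℝ K)
    (hmem : τ ∈ convexHull ℝ (⋃ i ∈ T, Ks i)) : ∃ i ∈ T, τ ∈ Ks i := by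
  classical
  induction T using Finset.induction_on with
  | empty => simp at hmem
  | @insert i T hiT ih =>
    rw [Finset.set_biUnion_insert] at hmem
    by_cases hKi : Ks i = ∅
    · rw [hKi, Set.empty_union] at hmem
      obtain ⟨j, hj, hjm⟩ := ih (fun j hj => hKs j (Finset.mem_insert_of_mem hj))
        (fun j hj => hsub j (Finset.mem_insert_of_mem hj)) hmem
      exact ⟨j, Finset.mem_insert_of_mem hj, hjm⟩
    by_cases hU : (⋃ j ∈ T, Ks j) = ∅
    · rw [hU, Set.union_empty, (hKs i (Finset.mem_insert_self i T)).convexHull_eq] at hmem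
      exact ⟨i, Finset.mem_insert_self i T, hmem⟩
    rw [convexHull_union (nonempty_iff_ne_empty.2 hKi) (nonempty_iff_ne_empty.2 hU),
       (hKs i (Finset.mem_insert_self i T)).convexHull_eq, mem_convexJoin] at hmem
    obtain ⟨a, ha, b, hb, hseg⟩ := hmem
    have haK : a ∈ K := hsub i (Finset.mem_insert_self i T) ha
    have hbK : b ∈ K := by
      refine convexHull_min ?_ hconv hb
      exact Set.iUnion₂_subset fun j hj => hsub j (Finset.mem_insert_of_mem hj)
    rcases (mem_extremePoints_iff_forall_segment.mp hτ).2 a haK b hbK hseg with h | h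
    · exact ⟨i, Finset.mem_insert_self i T, h ▸ ha⟩
    · obtain ⟨j, hj, hjm⟩ := ih (fun j hj => hKs j (Finset.mem_insert_of_mem hj))
        (fun j hj => hsub j (Finset.mem_insert_of_mem hj)) (h ▸ hb)
      exact ⟨j, Finset.mem_insert_of_mem hj, hjm⟩

lemma isCompact_convexHull_biUnion (T : Finset ι) {Ks : ι → Set E}
    (hKs : ∀ i ∈ T, Convex ℝ (Ks i)) (hc : ∀ i ∈ T, IsCompact (Ks i)) :
    IsCompact (convexHull ℝ (⋃ i ∈ T, Ks i)) := by
  classical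
  induction T using Finset.induction_on with
  | empty => simp
  | @insert i T hiT ih =>
    rw [Finset.set_biUnion_insert]
    by_cases hKi : Ks i = ∅
    · rw [hKi, Set.empty_union]
      exact ih (fun j hj => hKs j (Finset.mem_insert_of_mem hj))
        (fun j hj => hc j (Finset.mem_insert_of_mem hj))
    by_cases hU : (⋃ j ∈ T, Ks j) = ∅
    · rw [hU, Set.union_empty, (hKs i (Finset.mem_insert_self i T)).convexHull_eq]
      exact hc i (Finset.mem_insert_self i T)
    rw [convexHull_union (nonempty_iff_ne_empty.2 hKi) (nonempty_iff_ne_empty.2 hU),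
       (hKs i (Finset.mem_insert_self i T)).convexHull_eq]
    exact isCompact_convexJoin' (hc i (Finset.mem_insert_self i T))
      (ih (fun j hj => hKs j (Finset.mem_insert_of_mem hj))
        (fun j hj => hc j (Finset.mem_insert_of_mem hj)))

/-- Milman-type result: an extreme point of a compact convex set `K` lying in the closed
convex hull of a compact subset `F ⊆ K` belongs to `F`. -/
lemma milman_extreme_mem [LocallyConvexSpace ℝ E] {K F : Set E} (hKconv : Convex ℝ K)
    (hKcomp : IsCompact K) (hFK : F ⊆ K) (hFc : IsCompact F) {τ : E}
    (hτ : τ ∈ Set.extremePoints ℝ K) (hmem : τ ∈ closure (convexHull ℝ F)) : τ ∈ F := by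
  by_contra hτF
  have key : ∀ σ : E, ∃ V : Set E, IsClosed V ∧ Convex ℝ V ∧ (σ ∈ F → V ∈ nhds σ ∧ τ ∉ V) := by
    intro σ
    by_cases hσ : σ ∈ F
    · have hne : τ ≠ σ := fun h => hτF (h ▸ hσ)
      have h1 : {τ}ᶜ ∈ nhds σ := (isOpen_compl_singleton).mem_nhds (by simpa using hne.symm)
      obtain ⟨Vc, hVc_nhds, hVc_closed, hVc_sub⟩ := exists_mem_nhds_isClosed_subset h1
      obtain ⟨W, ⟨hW_nhds, hW_conv⟩, hW_sub⟩ :=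
        ((LocallyConvexSpace.convex_basis (𝕜 := ℝ) σ).mem_iff).mp hVc_nhds
      refine ⟨closure W, isClosed_closure, hW_conv.closure, fun _ => ⟨Filter.mem_of_superset
        hW_nhds subset_closure, fun hc => ?_⟩⟩
      exact hVc_sub (hVc_closed.closure_subset_iff.mpr hW_sub hc) rfl
    · exact ⟨∅, isClosed_empty, convex_empty, fun h => absurd h hσ⟩
  choose V hVclosed hVconv hVF using key
  have hcover : F ⊆ ⋃ σ ∈ F, interior (V σ) := fun σ hσ =>
    Set.mem_biUnion hσ (mem_interior_iff_mem_nhds.mpr (hVF σ hσ).1)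
  obtain ⟨T0, hT0F, hT0fin, hcov⟩ :=
    hFc.elim_finite_subcover_image (fun σ _ => isOpen_interior) hcover
  classical
  set T : Finset E := hT0fin.toFinset with hT
  have hmemT : ∀ σ, σ ∈ T ↔ σ ∈ T0 := fun σ => hT0fin.mem_toFinset
  set Ks : E → Set E := fun σ => K ∩ V σ with hKsdef
  have hKs : ∀ σ ∈ T, Convex ℝ (Ks σ) := fun σ _ => hKconv.inter (hVconv σ)
  have hsub : ∀ σ ∈ T, Ks σ ⊆ K := fun σ _ => Set.inter_subset_left
  have hcomp : ∀ σ ∈ T, IsCompact (Ks σ) := fun σ _ => hKcomp.inter_right (hVclosed σ)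
  have hFsub : F ⊆ ⋃ σ ∈ T, Ks σ := by
    intro x hx
    obtain ⟨σ, hσT0, hxσ⟩ := Set.mem_iUnion₂.mp (hcov hx)
    exact Set.mem_biUnion ((hmemT σ).mpr hσT0) ⟨hFK hx, interior_subset hxσ⟩
  have hDcomp : IsCompact (convexHull ℝ (⋃ σ ∈ T, Ks σ)) :=
    isCompact_convexHull_biUnion T hKs hcomp
  have hτD : τ ∈ convexHull ℝ (⋃ σ ∈ T, Ks σ) :=
    (hDcomp.isClosed.closure_subset_iff.mpr (convexHull_mono hFsub)) hmem
  obtain ⟨σ, hσT, hτσ⟩ := extreme_of_convexHull_biUnion hKconv T hKs hsub hτ hτD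
  exact (hVF σ (hT0F ((hmemT σ).mp hσT))).2 hτσ.2

end Milman

noncomputable instance (A : Type u) [CStarAlgebra A] : LocallyConvexSpace ℝ (WeakDual ℂ A) :=
  WeakBilin.locallyConvexSpace

instance instCSMulRealWD (A : Type u) [CStarAlgebra A] :
    @ContinuousSMul ℝ (WeakDual ℂ A)
      (Module.complexToReal (WeakDual ℂ A)).toDistribMulAction.toMulAction.toSMul _ _ :=
  ⟨(Complex.continuous_ofReal.comp continuous_fst).smul continuous_snd⟩

instance instLCSRealWD (A : Type u) [CStarAlgebra A] :
    @LocallyConvexSpace ℝ (WeakDual ℂ A) _ _ _ (Module.complexToReal (WeakDual ℂ A)) _ := by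
  have hmod : Module.complexToReal (WeakDual ℂ A) = WeakDual.instModule' ℝ := by
    ext r x
    refine DFunLike.ext _ _ fun a => ?_
    show (r : ℂ) * x a = r • x a
    exact Complex.real_smul.symm
  rw [hmod]
  exact WeakBilin.locallyConvexSpace

instance (A : Type u) [CStarAlgebra A] : NoZeroSMulDivisors ℝ (WeakDual ℂ A) :=
  ⟨fun {c x} h => by
    by_cases hc : c = 0
    · exact Or.inl hc
    · refine Or.inr ?_
      have h2 := congrArg (fun z => c⁻¹ • z) h
      erw [smul_smul, inv_mul_cancel₀ hc, one_smul, smul_zero] at h2; exact h2⟩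

set_option maxHeartbeats 1000000 in
theorem stmt_7 {A : Type u} [CStarAlgebra A] [TopologicalSpace.SeparableSpace A]
    [MeasurableSpace (WeakDual ℂ A)] [BorelSpace (WeakDual ℂ A)]
    (hsimple : IsSimpleCStar A) (hinf : ¬ FiniteDimensional ℂ A)
    (hXne : (extTS A).Nonempty) (hX : IsFSigmaIn (extTS A))
    (μ : WeakDual ℂ A → Measure (WeakDual ℂ A))
    (hμ : ∀ τ ∈ closure (extTS A) \ extTS A,
      IsProbabilityMeasure (μ τ) ∧ μ τ (extTS A)ᶜ = 0 ∧ Represents (μ τ) τ)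
    {F : Set (WeakDual ℂ A)} (hFX : F ⊆ extTS A) (hF : IsCompact F)
    {ε : ℝ} (hε0 : 0 < ε) (hε1 : ε < 1)
    (hμF : ∀ τ ∈ closure (extTS A) \ extTS A, ENNReal.ofReal ε < μ τ F) :
    IsCompact ((closure (extTS A) \ extTS A) ∪ F) := by
  classical
  haveI hnontriv : Nontrivial A := by
    by_contra h
    rw [not_nontrivial_iff_subsingleton] at h
    exact hinf (Module.Finite.of_basis (Module.Basis.empty A (ι := Fin 0)))
  have hTSc : IsClosed (TS A) := isClosed_TS
  have hTSconv : Convex ℝ (TS A) := convex_TS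
  have hTScomp : IsCompact (TS A) := isCompact_TS
  set X := extTS A with hXdef
  have hXTS : X ⊆ TS A := extremePoints_subset
  have hclTS : closure X ⊆ TS A := hTSc.closure_subset_iff.mpr hXTS
  have key : ∀ τ ∈ X, τ ∈ closure (closure X \ X) → τ ∈ F := by
    intro τ hτX hτcl
    by_contra hτF
    have hτC : τ ∉ closure (convexHull ℝ F) := fun h => hτF
      (milman_extreme_mem hTSconv hTScomp (hFX.trans hXTS) hF hτX h)
    set C := closure (convexHull ℝ F) with hC
    have hCK : C ⊆ TS A := hTSc.closure_subset_iff.mpr (convexHull_min (hFX.trans hXTS) hTSconv)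
    have hCcomp : IsCompact C := hTScomp.of_isClosed_subset isClosed_closure hCK
    have hCconv : Convex ℝ C := (convex_convexHull ℝ F).closure
    set S := (fun p : WeakDual ℂ A × WeakDual ℂ A => ε • p.1 + (1 - ε) • p.2) '' (C ×ˢ TS A)
      with hS
    have hScomp : IsCompact S := (hCcomp.prod hTScomp).image
      ((continuous_fst.const_smul ε).add (continuous_snd.const_smul (1 - ε)))
    have hSconv : Convex ℝ S := by
      rintro - ⟨⟨x1, y1⟩, ⟨hx1, hy1⟩, rfl⟩ - ⟨⟨x2, y2⟩, ⟨hx2, hy2⟩, rfl⟩ s t hs ht hst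
      refine ⟨(s • x1 + t • x2, s • y1 + t • y2),
        ⟨hCconv hx1 hx2 hs ht hst, hTSconv hy1 hy2 hs ht hst⟩, ?_⟩
      simp only
      module
    have hτS : τ ∉ S := by
      rintro ⟨⟨x, y⟩, ⟨hx, hy⟩, heq⟩
      simp only at heq
      have hseg : τ ∈ segment ℝ x y := ⟨ε, 1 - ε, hε0.le, by linarith, by ring, heq⟩
      rcases (mem_extremePoints_iff_forall_segment.mp hτX).2 x (hCK hx) y hy hseg with h | h
      · exact hτC (h ▸ hx)
      · rw [h] at heq
        have h8 : ε • x = ε • τ := by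
          have h9 : ε • x = τ - (1 - ε) • τ := eq_sub_of_add_eq heq
          erw [h9, sub_smul, one_smul, sub_sub_cancel]; rfl
        have hxτ : x = τ := by
          have h10 : ε⁻¹ • (ε • x) = ε⁻¹ • (ε • τ) := congrArg _ h8
          erw [smul_smul, smul_smul, inv_mul_cancel₀ hε0.ne', one_smul, one_smul] at h10; exact h10
        exact hτC (hxτ ▸ hx)
    obtain ⟨L, u, hLu, hLS⟩ := geometric_hahn_banach_point_closed hSconv hScomp.isClosed hτS
    obtain ⟨y₀, hy₀TS, hy₀min⟩ := hTScomp.exists_isMinOn ⟨τ, hXTS hτX⟩ L.continuous.continuousOn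
    set m := L y₀ with hm
    have hmle : ∀ ρ ∈ TS A, m ≤ L ρ := fun ρ hρ => hy₀min hρ
    have hmτ : m ≤ L τ := hmle τ (hXTS hτX)
    have hum : m < u := lt_of_le_of_lt hmτ hLu
    have hFbound : ∀ x ∈ F, u < ε * L x + (1 - ε) * m := by
      intro x hx
      have hxC : x ∈ C := subset_closure (subset_convexHull ℝ F hx)
      have hmem : (ε • x + (1 - ε) • y₀) ∈ S := ⟨(x, y₀), ⟨hxC, hy₀TS⟩, rfl⟩
      have h4 := hLS _ hmem
      erw [map_add, L.map_smul, L.map_smul, smul_eq_mul, smul_eq_mul] at h4; exact h4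
    set d := u - m with hd
    have hd0 : 0 < d := sub_pos.mpr hum
    set f : WeakDual ℂ A → ℝ := fun ρ => (L ρ - m) / d with hf
    have hfcont : Continuous f := (L.continuous.sub continuous_const).div_const d
    have hfτ : f τ < 1 := (div_lt_one hd0).mpr (by simp only [hd]; linarith)
    have hf0 : ∀ ρ ∈ TS A, 0 ≤ f ρ := fun ρ hρ => div_nonneg (by linarith [hmle ρ hρ]) hd0.le
    have hfF : ∀ x ∈ F, 1 / ε < f x := by
      intro x hx
      have h5 := hFbound x hx
      rw [hf]
      simp only
      rw [div_lt_div_iff₀ hε0 hd0]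
      nlinarith
    have haff : AffineOnTS f := by
      intro σ hσ σ' hσ' t ht0 ht1
      simp only [hf, map_add]
      erw [L.map_smul, L.map_smul]
      simp only [smul_eq_mul]
      field_simp
      ring
    have hopen : IsOpen {ρ : WeakDual ℂ A | f ρ < 1} := isOpen_lt hfcont continuous_const
    obtain ⟨τ', hτ'o, hτ's⟩ := mem_closure_iff.mp hτcl _ hopen hfτ
    obtain ⟨hprob, hnull, hrep⟩ := hμ τ' hτ's
    have hfτ' : f τ' = ∫ σ, f σ ∂(μ τ') := hrep f hfcont.continuousOn haff
    obtain ⟨z₀, hz₀TS, hz₀max⟩ := hTScomp.exists_isMaxOn ⟨τ, hXTS hτX⟩ hfcont.norm.continuousOn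
    have haemem : ∀ᵐ σ ∂(μ τ'), σ ∈ X := by
      rw [MeasureTheory.ae_iff]
      exact hnull
    have hbound : ∀ᵐ σ ∂(μ τ'), ‖f σ‖ ≤ ‖f z₀‖ := haemem.mono fun σ hσ => hz₀max (hXTS hσ)
    have hfint : MeasureTheory.Integrable f (μ τ') :=
      MeasureTheory.Integrable.mono' (MeasureTheory.integrable_const ‖f z₀‖)
        hfcont.aestronglyMeasurable hbound
    set g : WeakDual ℂ A → ℝ := F.indicator (fun _ => 1 / ε) with hg
    have hgint : MeasureTheory.Integrable g (μ τ') :=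
      (MeasureTheory.integrable_const (1 / ε)).indicator hF.isClosed.measurableSet
    have hle : g ≤ᵐ[μ τ'] f := haemem.mono fun σ hσ => by
      by_cases hσF : σ ∈ F
      · simpa [hg, Set.indicator_of_mem hσF] using (hfF σ hσF).le
      · simpa [hg, Set.indicator_of_notMem hσF] using hf0 σ (hXTS hσ)
    have hint_le : ∫ σ, g σ ∂(μ τ') ≤ ∫ σ, f σ ∂(μ τ') :=
      MeasureTheory.integral_mono_ae hgint hfint hle
    have hintg : ∫ σ, g σ ∂(μ τ') = (μ τ' F).toReal * (1 / ε) := by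
      rw [hg, MeasureTheory.integral_indicator_const _ hF.isClosed.measurableSet, smul_eq_mul, measureReal_def]
    have hμ' := hμF τ' hτ's
    have hμlt : ε < (μ τ' F).toReal := by
      have hne : μ τ' F ≠ ⊤ := MeasureTheory.measure_ne_top _ _
      have h6 := (ENNReal.toReal_lt_toReal ENNReal.ofReal_ne_top hne).mpr hμ'
      rwa [ENNReal.toReal_ofReal hε0.le] at h6
    have hgt : (1 : ℝ) < ∫ σ, f σ ∂(μ τ') := by
      refine lt_of_lt_of_le ?_ hint_le
      rw [hintg]
      calc (1 : ℝ) = ε * (1 / ε) := by field_simp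
        _ < (μ τ' F).toReal * (1 / ε) :=
            mul_lt_mul_of_pos_right hμlt (by positivity)
    rw [← hfτ'] at hgt
    have : f τ' < 1 := hτ'o
    linarith
  have hunion_sub : (closure X \ X) ∪ F ⊆ closure X :=
    Set.union_subset Set.diff_subset (hFX.trans subset_closure)
  have hclosed : IsClosed ((closure X \ X) ∪ F) := by
    apply isClosed_of_closure_subset
    rw [closure_union, hF.isClosed.closure_eq]
    rintro τ (hτ | hτ)
    · have hτclX : τ ∈ closure X := by
        have h7 := closure_mono (Set.diff_subset : closure X \ X ⊆ closure X) hτ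
        rwa [closure_closure] at h7
      by_cases hX' : τ ∈ X
      · exact Or.inr (key τ hX' hτ)
      · exact Or.inl ⟨hτclX, hX'⟩
    · exact Or.inr hτ
  exact (hTScomp.of_isClosed_subset isClosed_closure
    (closure_minimal hXTS hTSc)).of_isClosed_subset hclosed hunion_sub


end
end
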